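/- Let (x^k)_{k ≥ −1} be a cDCA sequence with x⁰ ∈ dom g, and suppose F is level-bounded (for every r ∈ ℝ the set {x ∈ ℝⁿ : F(x) ≤ r} is bounded). Then every accumulation point x̂ of the sequence (x^k) is a critical point of F, i.e., 0 ∈ ∇f(x̂) + ∂g(x̂) − ∂h(x̂). -/

import Mathlib

open Set Filter Topology
open scoped InnerProductSpace

noncomputable section

abbrev Euc (n : ℕ) := EuclideanSpace ℝ (Fin n)

/-- The subdifferential of an extended-real-valued function `g` at `u`. -/
def SubdiffE {n : ℕ} (g : Euc n → EReal) (u : Euc n) : Set (Euc n) :=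
  {ξ | ∀ z, g u + ((⟪ξ, z - u⟫_ℝ : ℝ) : EReal) ≤ g z}

/-- The subdifferential of a real-valued function `h` at `u`. -/
def SubdiffR {n : ℕ} (h : Euc n → ℝ) (u : Euc n) : Set (Euc n) :=
  {ξ | ∀ z, h u + ⟪ξ, z - u⟫_ℝ ≤ h z}

/-- Convexity for extended-real-valued functions. -/
def ConvexEReal {n : ℕ} (g : Euc n → EReal) : Prop :=
  ∀ x y : Euc n, ∀ a b : ℝ, 0 ≤ a → 0 ≤ b → a + b = 1 →
    g (a • x + b • y) ≤ (a : EReal) * g x + (b : EReal) * g y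

/-- `g` is proper: nowhere `⊥` and somewhere finite. -/
def ProperE {n : ℕ} (g : Euc n → EReal) : Prop :=
  (∀ x, g x ≠ ⊥) ∧ ∃ x, g x ≠ ⊤

/-- `P` is the proximal mapping of `g`: for every `α > 0` and every `x`, `P α x` is
the unique minimizer over `ℝⁿ` of `y ↦ g y + (1/(2α)) ‖x - y‖²`. -/
def IsProx {n : ℕ} (g : Euc n → EReal) (P : ℝ → Euc n → Euc n) : Prop :=
  ∀ α : ℝ, 0 < α → ∀ x p, P α x = p ↔
    (∀ y, g p + ((1/(2*α) * ‖x - p‖^2 : ℝ) : EReal) ≤ g y + ((1/(2*α) * ‖x - y‖^2 : ℝ) : EReal))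

/-- A cDCA sequence, indexed so that `x 0 = x⁻¹` and `x (k+1) = xᵏ` for `k ≥ 0`:
for every `k ≥ 0` there exist `ηᵏ ∈ ∂h(xᵏ)` and `yᵏ` with
`x^{k+1} = Prox_{μg}((1-μλ)yᵏ - μ∇f(yᵏ) + μλxᵏ + μηᵏ)` and
`‖x^{k+1} - yᵏ‖ ≤ δ‖x^{k-1} - xᵏ‖`. -/
def IsCDCA {n : ℕ} (f' : Euc n → Euc n) (h : Euc n → ℝ) (P : ℝ → Euc n → Euc n)
    (lam mu δ : ℝ) (x : ℕ → Euc n) : Prop :=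
  ∀ k : ℕ, ∃ η ∈ SubdiffR h (x (k+1)), ∃ y,
    x (k+2) = P mu ((1 - mu*lam) • y - mu • f' y + (mu*lam) • x (k+1) + mu • η) ∧
    ‖x (k+2) - y‖ ≤ δ * ‖x k - x (k+1)‖

lemma line_hasDerivAt {n : ℕ} (f : Euc n → ℝ) (f' : Euc n → Euc n)
    (hfgrad : ∀ z, HasGradientAt f (f' z) z) (a d : Euc n) (t : ℝ) :
    HasDerivAt (fun s : ℝ => f (a + s • d)) ⟪f' (a + t • d), d⟫_ℝ t := by
  have hc : HasDerivAt (fun s : ℝ => a + s • d) d t := by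
    simpa using ((hasDerivAt_id t).smul_const d).const_add a
  have hg := (hfgrad (a + t • d)).hasFDerivAt
  have := hg.comp_hasDerivAt t hc
  simp only [InnerProductSpace.toDual_apply_apply] at this
  exact this

lemma grad_ineq {n : ℕ} (f : Euc n → ℝ) (f' : Euc n → Euc n)
    (hfconv : ConvexOn ℝ Set.univ f) (hfgrad : ∀ z, HasGradientAt f (f' z) z)
    (u z : Euc n) : f u + ⟪f' u, z - u⟫_ℝ ≤ f z := by
  set ψ : ℝ → ℝ := fun s => f (u + s • (z - u)) with hψdef
  have hd : HasDerivAt ψ ⟪f' u, z - u⟫_ℝ 0 := by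
    simpa using line_hasDerivAt f f' hfgrad u (z - u) 0
  have hslope : Tendsto (slope ψ 0) (𝓝[>] 0) (𝓝 ⟪f' u, z - u⟫_ℝ) :=
    (hasDerivAt_iff_tendsto_slope.1 hd).mono_left
      (nhdsWithin_mono 0 (fun s hs => ne_of_gt hs))
  have hev : ∀ᶠ t in 𝓝[>] (0:ℝ), slope ψ 0 t ≤ f z - f u := by
    filter_upwards [Ioo_mem_nhdsGT_of_mem (by norm_num : (0:ℝ) ∈ Ico 0 1)] with t ht
    have h1 : ψ t ≤ (1 - t) * f u + t * f z := by
      have := hfconv.2 (mem_univ u) (mem_univ z) (by linarith [ht.1, ht.2] : (0:ℝ) ≤ 1 - t)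
        ht.1.le (by ring)
      have heq : u + t • (z - u) = (1 - t) • u + t • z := by module
      simpa [hψdef, heq] using this
    have hψ0 : ψ 0 = f u := by simp [hψdef]
    have : (ψ t - ψ 0) / (t - 0) ≤ f z - f u := by
      rw [sub_zero, div_le_iff₀ ht.1]; nlinarith [ht.1, ht.2]
    simpa [slope_def_field] using this
  have := le_of_tendsto hslope hev
  linarith

lemma descent_lemma {n : ℕ} (f : Euc n → ℝ) (f' : Euc n → Euc n) (Lf : ℝ)
    (hfgrad : ∀ z, HasGradientAt f (f' z) z)
    (hflip : ∀ z w, ‖f' z - f' w‖ ≤ Lf * ‖z - w‖) (a b : Euc n) :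
    f b ≤ f a + ⟪f' a, b - a⟫_ℝ + Lf/2 * ‖b - a‖^2 := by
  have hf'cont : Continuous f' := by
    have : LipschitzWith (Real.toNNReal Lf) f' :=
      LipschitzWith.of_dist_le_mul (fun z w => by
        have := hflip z w
        have hL : (Real.toNNReal Lf : ℝ) = max Lf 0 := Real.coe_toNNReal' Lf
        rw [dist_eq_norm, dist_eq_norm, hL]
        nlinarith [norm_nonneg (z - w), le_max_left Lf 0])
    exact this.continuous
  set d := b - a with hd
  have hcont : Continuous fun t : ℝ => ⟪f' (a + t • d), d⟫_ℝ := by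
    apply Continuous.inner
    · exact hf'cont.comp (continuous_const.add (continuous_id.smul continuous_const))
    · exact continuous_const
  have hftc : ∫ t in (0:ℝ)..1, ⟪f' (a + t • d), d⟫_ℝ = f (a + (1:ℝ) • d) - f (a + (0:ℝ) • d) := by
    exact intervalIntegral.integral_eq_sub_of_hasDerivAt
      (fun t _ => line_hasDerivAt f f' hfgrad a d t) (hcont.intervalIntegrable 0 1)
  have hmono : ∫ t in (0:ℝ)..1, ⟪f' (a + t • d), d⟫_ℝ ≤
      ∫ t in (0:ℝ)..1, (⟪f' a, d⟫_ℝ + Lf * t * ‖d‖^2) := by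
    apply intervalIntegral.integral_mono_on (by norm_num)
      (hcont.intervalIntegrable 0 1)
      (((continuous_const.add ((continuous_const.mul continuous_id).mul
        continuous_const))).intervalIntegrable 0 1)
    intro t ht
    rw [Set.mem_Icc] at ht
    have h1 : ⟪f' (a + t • d), d⟫_ℝ - ⟪f' a, d⟫_ℝ = ⟪f' (a + t • d) - f' a, d⟫_ℝ := by
      rw [inner_sub_left]
    have h2 : ⟪f' (a + t • d) - f' a, d⟫_ℝ ≤ ‖f' (a + t • d) - f' a‖ * ‖d‖ :=
      real_inner_le_norm _ _
    have h3 : ‖f' (a + t • d) - f' a‖ ≤ Lf * (t * ‖d‖) := by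
      have := hflip (a + t • d) a
      simpa [norm_smul, abs_of_nonneg ht.1] using this
    calc ⟪f' (a + t • d), d⟫_ℝ
        = ⟪f' a, d⟫_ℝ + ⟪f' (a + t • d) - f' a, d⟫_ℝ := by rw [inner_sub_left]; ring
      _ ≤ ⟪f' a, d⟫_ℝ + ‖f' (a + t • d) - f' a‖ * ‖d‖ := by linarith [h2]
      _ ≤ ⟪f' a, d⟫_ℝ + (Lf * (t * ‖d‖)) * ‖d‖ := by
          have := mul_le_mul_of_nonneg_right h3 (norm_nonneg d); linarith
      _ = ⟪f' a, d⟫_ℝ + Lf * t * ‖d‖^2 := by ring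
  have hint : ∫ t in (0:ℝ)..1, (⟪f' a, d⟫_ℝ + Lf * t * ‖d‖^2)
      = ⟪f' a, d⟫_ℝ + Lf/2 * ‖d‖^2 := by
    have hrw : ∫ t in (0:ℝ)..1, (⟪f' a, d⟫_ℝ + Lf * t * ‖d‖^2)
        = ∫ t in (0:ℝ)..1, (⟪f' a, d⟫_ℝ + (Lf * ‖d‖^2) * t) := by
      congr 1; funext t; ring
    have h2' : IntervalIntegrable (fun t : ℝ => Lf * ‖d‖^2 * t) MeasureTheory.volume 0 1 := by
      apply Continuous.intervalIntegrable; fun_prop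
    rw [hrw, intervalIntegral.integral_add intervalIntegrable_const h2',
      intervalIntegral.integral_const_mul, integral_id, intervalIntegral.integral_const]
    simp; ring
  simp only [one_smul, zero_smul, add_zero] at hftc
  have hab : a + d = b := by rw [hd]; abel
  rw [hab] at hftc
  have := hftc ▸ hmono
  rw [hint] at this
  linarith

lemma interp_ineq {n : ℕ} (f : Euc n → ℝ) (f' : Euc n → Euc n) (Lf : ℝ) (hLf : 0 < Lf)
    (hfconv : ConvexOn ℝ Set.univ f) (hfgrad : ∀ z, HasGradientAt f (f' z) z)
    (hflip : ∀ z w, ‖f' z - f' w‖ ≤ Lf * ‖z - w‖) (y p : Euc n) :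
    f y + ⟪f' y, p - y⟫_ℝ + 1/(2*Lf) * ‖f' p - f' y‖^2 ≤ f p := by
  set Δ := f' p - f' y with hΔ
  set z := p - (1/Lf) • Δ with hz
  have h1 : f z ≤ f p + ⟪f' p, z - p⟫_ℝ + Lf/2 * ‖z - p‖^2 :=
    descent_lemma f f' Lf hfgrad hflip p z
  have h2 : f y + ⟪f' y, z - y⟫_ℝ ≤ f z := grad_ineq f f' hfconv hfgrad y z
  have hzp : z - p = -((1/Lf) • Δ) := by rw [hz]; abel
  have e1 : ⟪f' p, z - p⟫_ℝ = -(1/Lf) * ⟪f' p, Δ⟫_ℝ := by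
    rw [hzp, inner_neg_right, real_inner_smul_right]; ring
  have e2 : ‖z - p‖^2 = (1/Lf)^2 * ‖Δ‖^2 := by
    rw [hzp, norm_neg, norm_smul, Real.norm_eq_abs,
      abs_of_nonneg (by positivity : (0:ℝ) ≤ 1/Lf)]
    rw [mul_pow]
  have e3 : ⟪f' y, z - y⟫_ℝ = ⟪f' y, p - y⟫_ℝ - (1/Lf) * ⟪f' y, Δ⟫_ℝ := by
    have : z - y = (p - y) - (1/Lf) • Δ := by rw [hz]; abel
    rw [this, inner_sub_right, real_inner_smul_right]
  have e4 : ⟪f' p, Δ⟫_ℝ - ⟪f' y, Δ⟫_ℝ = ‖Δ‖^2 := by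
    rw [← inner_sub_left, ← hΔ, real_inner_self_eq_norm_sq]
  rw [e1, e2] at h1
  rw [e3] at h2
  have harith : Lf/2 * ((1/Lf)^2 * ‖Δ‖^2) = 1/(2*Lf) * ‖Δ‖^2 := by
    field_simp
  rw [harith] at h1
  have e4' : 1/Lf * ⟪f' p, Δ⟫_ℝ - 1/Lf * ⟪f' y, Δ⟫_ℝ
      = 1/(2*Lf) * ‖Δ‖^2 + 1/(2*Lf) * ‖Δ‖^2 := by
    rw [← mul_sub, e4]; field_simp; ring
  linarith [h1, h2, e4']

lemma key_norm_bound {n : ℕ} (f : Euc n → ℝ) (f' : Euc n → Euc n) (Lf : ℝ) (hLf : 0 < Lf)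
    (hfconv : ConvexOn ℝ Set.univ f) (hfgrad : ∀ z, HasGradientAt f (f' z) z)
    (hflip : ∀ z w, ‖f' z - f' w‖ ≤ Lf * ‖z - w‖) (p y : Euc n) :
    ‖f' p - f' y - (Lf/2) • (p - y)‖ ≤ Lf/2 * ‖p - y‖ := by
  have coco : 1/Lf * ‖f' p - f' y‖^2 ≤ ⟪f' p - f' y, p - y⟫_ℝ := by
    have h1 := interp_ineq f f' Lf hLf hfconv hfgrad hflip y p
    have h2 := interp_ineq f f' Lf hLf hfconv hfgrad hflip p y
    have e1 : ‖f' y - f' p‖ = ‖f' p - f' y‖ := norm_sub_rev _ _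
    rw [e1] at h2
    have e2 : ⟪f' p - f' y, p - y⟫_ℝ = ⟪f' p, p - y⟫_ℝ - ⟪f' y, p - y⟫_ℝ := inner_sub_left _ _ _
    have e3 : ⟪f' p, y - p⟫_ℝ = -⟪f' p, p - y⟫_ℝ := by
      rw [← inner_neg_right]; congr 1; abel
    have hr : 1/(2*Lf) * ‖f' p - f' y‖^2 + 1/(2*Lf) * ‖f' p - f' y‖^2
        = 1/Lf * ‖f' p - f' y‖^2 := by field_simp; ring
    linarith [h1, h2, e2, e3, hr]
  have expand : ‖f' p - f' y - (Lf/2) • (p - y)‖^2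
      = ‖f' p - f' y‖^2 - Lf * ⟪f' p - f' y, p - y⟫_ℝ + (Lf/2)^2 * ‖p - y‖^2 := by
    rw [norm_sub_sq_real, real_inner_smul_right, norm_smul]
    rw [Real.norm_eq_abs, abs_of_nonneg (by positivity : (0:ℝ) ≤ Lf/2)]
    ring
  have h4 : ‖f' p - f' y - (Lf/2) • (p - y)‖^2 ≤ (Lf/2 * ‖p - y‖)^2 := by
    rw [expand]
    have := mul_le_mul_of_nonneg_left coco (le_of_lt hLf)
    have hh : Lf * (1/Lf * ‖f' p - f' y‖^2) = ‖f' p - f' y‖^2 := by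
      field_simp
    nlinarith [sq_nonneg ‖f' p - f' y‖]
  have hn1 : (0:ℝ) ≤ ‖f' p - f' y - (Lf/2) • (p - y)‖ := norm_nonneg _
  have hn2 : (0:ℝ) ≤ Lf/2 * ‖p - y‖ := by positivity
  nlinarith



lemma prox_subgrad {n : ℕ} (g : Euc n → EReal) (hgbot : ∀ x, g x ≠ ⊥)
    (x₀ : Euc n) (hx₀ : g x₀ ≠ ⊤) (hgconv : ConvexEReal g)
    (P : ℝ → Euc n → Euc n) (hP : IsProx g P) (mu : ℝ) (hmu : 0 < mu)
    (v p : Euc n) (hp : P mu v = p) :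
    g p ≠ ⊤ ∧ ∀ z : Euc n, g p + ((⟪mu⁻¹ • (v - p), z - p⟫_ℝ : ℝ) : EReal) ≤ g z := by
  have key := ((hP mu hmu v p).1 hp)
  have hptop : g p ≠ ⊤ := by
    intro htop
    have h1 := key x₀
    rw [htop] at h1
    have h2 : g x₀ + ((1/(2*mu) * ‖v - x₀‖^2 : ℝ) : EReal) < ⊤ :=
      EReal.add_lt_top hx₀ (EReal.coe_ne_top _)
    have h3 : (⊤ : EReal) + ((1/(2*mu) * ‖v - p‖^2 : ℝ) : EReal) = ⊤ := by
      rw [EReal.top_add_of_ne_bot (EReal.coe_ne_bot _)]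
    rw [h3] at h1
    exact absurd (top_le_iff.1 h1) (ne_of_lt h2)
  constructor
  · exact hptop
  intro z
  by_cases hz : g z = ⊤
  · rw [hz]; exact le_top
  set gp := (g p).toReal with hgpdef
  set gz := (g z).toReal with hgzdef
  have hgp : ((gp : ℝ) : EReal) = g p := EReal.coe_toReal hptop (hgbot p)
  have hgz : ((gz : ℝ) : EReal) = g z := EReal.coe_toReal hz (hgbot z)
  set a := v - p with ha
  set b := z - p with hb
  set C := 1/(2*mu) * ‖b‖^2 with hC
  have hC0 : 0 ≤ C := by positivity
  have hkey : ∀ t : ℝ, t ∈ Ioc (0:ℝ) 1 → gp + mu⁻¹ * ⟪a, b⟫_ℝ ≤ gz + t * C := by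
    intro t ht
    set yt := p + t • b with hyt
    have hconv := hgconv z p t (1-t) ht.1.le (by linarith [ht.2]) (by ring)
    have hytc : t • z + (1-t) • p = yt := by rw [hyt, hb]; module
    rw [hytc] at hconv
    have hkeyt := key yt
    have hvyt : v - yt = a - t • b := by rw [hyt, ha]; module
    have hnorm : ‖v - yt‖^2 = ‖a‖^2 - 2*t*⟪a, b⟫_ℝ + t^2*‖b‖^2 := by
      rw [hvyt, norm_sub_sq_real, real_inner_smul_right, norm_smul,
        Real.norm_eq_abs, abs_of_nonneg ht.1.le, mul_pow]
      ring
    have hconv' : g yt ≤ ((t * gz + (1-t) * gp : ℝ) : EReal) := by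
      calc g yt ≤ (t : EReal) * g z + ((1-t : ℝ) : EReal) * g p := hconv
        _ = ((t * gz + (1-t) * gp : ℝ) : EReal) := by
            rw [← hgp, ← hgz, ← EReal.coe_mul, ← EReal.coe_mul, ← EReal.coe_add]
    have hchain : ((gp + 1/(2*mu) * ‖a‖^2 : ℝ) : EReal)
        ≤ ((t * gz + (1-t) * gp + 1/(2*mu) * ‖v - yt‖^2 : ℝ) : EReal) := by
      calc ((gp + 1/(2*mu) * ‖a‖^2 : ℝ) : EReal)
          = g p + ((1/(2*mu) * ‖v - p‖^2 : ℝ) : EReal) := by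
            rw [← hgp, ← EReal.coe_add, ha]
        _ ≤ g yt + ((1/(2*mu) * ‖v - yt‖^2 : ℝ) : EReal) := hkeyt
        _ ≤ ((t * gz + (1-t) * gp : ℝ) : EReal) + ((1/(2*mu) * ‖v - yt‖^2 : ℝ) : EReal) :=
            add_le_add_left hconv' _
        _ = ((t * gz + (1-t) * gp + 1/(2*mu) * ‖v - yt‖^2 : ℝ) : EReal) := by
            rw [← EReal.coe_add]
    have hreal : gp + 1/(2*mu) * ‖a‖^2
        ≤ t * gz + (1-t) * gp + 1/(2*mu) * ‖v - yt‖^2 := EReal.coe_le_coe_iff.1 hchain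
    rw [hnorm] at hreal
    have hcc : mu⁻¹ = 2 * (1/(2*mu)) := by field_simp
    rw [hC, hcc]
    have ht0 := ht.1
    nlinarith [hreal, ht0, mul_pos ht0 ht0]
  have hfinal : gp + mu⁻¹ * ⟪a, b⟫_ℝ ≤ gz := by
    apply le_of_forall_pos_le_add
    intro ε hε
    have htpos : 0 < min 1 (ε/(C+1)) := lt_min one_pos (by positivity)
    have h1 := hkey (min 1 (ε/(C+1))) ⟨htpos, min_le_left _ _⟩
    have h2 : min 1 (ε/(C+1)) * C ≤ ε := by
      have hle : min 1 (ε/(C+1)) ≤ ε/(C+1) := min_le_right _ _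
      have : min 1 (ε/(C+1)) * C ≤ ε/(C+1) * C :=
        mul_le_mul_of_nonneg_right hle hC0
      have h3 : ε/(C+1) * C ≤ ε := by
        rw [div_mul_eq_mul_div, div_le_iff₀ (by linarith : (0:ℝ) < C+1)]
        nlinarith
      linarith
    linarith
  calc g p + ((⟪mu⁻¹ • (v - p), z - p⟫_ℝ : ℝ) : EReal)
      = ((gp + mu⁻¹ * ⟪a, b⟫_ℝ : ℝ) : EReal) := by
        rw [← hgp, ← EReal.coe_add, real_inner_smul_left, ha, hb]
    _ ≤ ((gz : ℝ) : EReal) := EReal.coe_le_coe_iff.2 hfinal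
    _ = g z := hgz

lemma lsc_lower_bound {n : ℕ} (g : Euc n → EReal) (hglsc : LowerSemicontinuous g)
    (hgbot : ∀ x, g x ≠ ⊥) (K : Set (Euc n)) (hK : IsCompact K) :
    ∃ c : ℝ, ∀ z ∈ K, ((c : ℝ) : EReal) ≤ g z := by
  set r : Euc n → ℝ := fun z => if g z = ⊤ then 0 else (g z).toReal - 1 with hrdef
  have hr : ∀ z, ((r z : ℝ) : EReal) < g z := by
    intro z
    by_cases h : g z = ⊤
    · simp only [hrdef, h, if_pos]
      exact EReal.coe_lt_top 0
    · simp only [hrdef, if_neg h]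
      rw [← EReal.coe_toReal h (hgbot z)]
      exact_mod_cast sub_one_lt _
  obtain ⟨t, -, ht⟩ := hK.elim_nhds_subcover (fun z => {w | ((r z : ℝ) : EReal) < g w})
    (fun z _ => hglsc z _ (hr z))
  rcases t.eq_empty_or_nonempty with hte | hte
  · exact ⟨0, fun w hw => absurd (ht hw) (by simp [hte])⟩
  · obtain ⟨z₀, hz₀t, hz₀min⟩ := t.exists_min_image r hte
    refine ⟨r z₀, fun w hw => ?_⟩
    have := ht hw
    simp only [Set.mem_iUnion] at this
    obtain ⟨z, hzt, hwz⟩ := this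
    exact le_trans (EReal.coe_le_coe_iff.2 (hz₀min z hzt)) (le_of_lt hwz)

lemma dec_core {n : ℕ} (f : Euc n → ℝ) (f' : Euc n → Euc n) (Lf lam δ tau : ℝ)
    (hLf : 0 < Lf) (hlam : 0 < lam) (hδ0 : 0 < δ)
    (htau : tau = Lf^2 * δ^2 / (8*lam))
    (hfconv : ConvexOn ℝ Set.univ f)
    (hfgrad : ∀ z, HasGradientAt f (f' z) z)
    (hflip : ∀ z w, ‖f' z - f' w‖ ≤ Lf * ‖z - w‖)
    (g : Euc n → EReal) (hgbot : ∀ x, g x ≠ ⊥)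
    (h : Euc n → ℝ)
    (prev w p yk ηk ξk : Euc n)
    (hgw : g w ≠ ⊤) (hgp : g p ≠ ⊤)
    (hηsub : ηk ∈ SubdiffR h w)
    (hξeq : ξk = (Lf/2) • (yk - p) + lam • (w - p) - f' yk + ηk)
    (hξsub : ∀ z, g p + ((⟪ξk, z - p⟫_ℝ : ℝ) : EReal) ≤ g z)
    (hyd : ‖p - yk‖ ≤ δ * ‖prev - w‖) :
    f p - h p + (g p).toReal + (lam/2) * ‖w - p‖^2
      ≤ f w - h w + (g w).toReal + tau * ‖prev - w‖^2 := by
  have hfp : f p - f w ≤ ⟪f' p, p - w⟫_ℝ := by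
    have h1 := grad_ineq f f' hfconv hfgrad p w
    have e : ⟪f' p, w - p⟫_ℝ = -⟪f' p, p - w⟫_ℝ := by
      rw [← inner_neg_right]; congr 1; abel
    rw [e] at h1; linarith
  have hhp : ⟪ηk, p - w⟫_ℝ ≤ h p - h w := by
    have h1 : h w + ⟪ηk, p - w⟫_ℝ ≤ h p := by
      simp only [SubdiffR, Set.mem_setOf_eq] at hηsub
      exact hηsub p
    linarith
  have hgd : (g p).toReal - (g w).toReal ≤ ⟪ξk, p - w⟫_ℝ := by
    have h2 := hξsub w
    rw [← EReal.coe_toReal hgp (hgbot p), ← EReal.coe_toReal hgw (hgbot w),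
      ← EReal.coe_add, EReal.coe_le_coe_iff] at h2
    have e : ⟪ξk, w - p⟫_ℝ = -⟪ξk, p - w⟫_ℝ := by
      rw [← inner_neg_right]; congr 1; abel
    rw [e] at h2; linarith
  have hvec : f' p - ηk + ξk = (f' p - f' yk - (Lf/2) • (p - yk)) + lam • (w - p) := by
    rw [hξeq]; module
  have hinner : ⟪f' p - ηk + ξk, p - w⟫_ℝ
      ≤ Lf/2 * ‖p - yk‖ * ‖p - w‖ - lam * ‖p - w‖^2 := by
    rw [hvec, inner_add_left]
    have h1 : ⟪f' p - f' yk - (Lf/2) • (p - yk), p - w⟫_ℝ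
        ≤ Lf/2 * ‖p - yk‖ * ‖p - w‖ := by
      calc ⟪f' p - f' yk - (Lf/2) • (p - yk), p - w⟫_ℝ
          ≤ ‖f' p - f' yk - (Lf/2) • (p - yk)‖ * ‖p - w‖ := real_inner_le_norm _ _
        _ ≤ (Lf/2 * ‖p - yk‖) * ‖p - w‖ :=
            mul_le_mul_of_nonneg_right
              (key_norm_bound f f' Lf hLf hfconv hfgrad hflip p yk) (norm_nonneg _)
        _ = Lf/2 * ‖p - yk‖ * ‖p - w‖ := by ring
    have h2 : ⟪lam • (w - p), p - w⟫_ℝ = -(lam * ‖p - w‖^2) := by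
      rw [real_inner_smul_left]
      have e : w - p = -(p - w) := by abel
      rw [e, inner_neg_left, real_inner_self_eq_norm_sq]
      ring
    rw [h2]; linarith
  have hcomb : ⟪f' p - ηk + ξk, p - w⟫_ℝ
      = ⟪f' p, p - w⟫_ℝ - ⟪ηk, p - w⟫_ℝ + ⟪ξk, p - w⟫_ℝ := by
    rw [inner_add_left, inner_sub_left]
  set A := ‖p - yk‖ with hA
  set B := ‖p - w‖ with hB
  have hA0 : 0 ≤ A := norm_nonneg _
  have hPn : 0 ≤ ‖prev - w‖ := norm_nonneg _
  have htot : (f p - h p + (g p).toReal) - (f w - h w + (g w).toReal)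
      ≤ Lf/2 * A * B - lam * B^2 := by
    linarith only [hfp, hhp, hgd, hinner, hcomb]
  have hyoung : Lf/2 * A * B ≤ Lf^2 * A^2/(8*lam) + lam/2 * B^2 := by
    rw [← sub_nonneg]
    have e : Lf^2 * A^2/(8*lam) + lam/2 * B^2 - Lf/2 * A * B
        = (Lf * A - 2*lam*B)^2/(8*lam) := by
      field_simp; ring
    rw [e]; positivity
  have hAP : A^2 ≤ δ^2 * ‖prev - w‖^2 := by nlinarith only [hyd, hA0, hPn, hδ0]
  have hfin : Lf^2 * A^2/(8*lam) ≤ tau * ‖prev - w‖^2 := by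
    rw [htau, div_mul_eq_mul_div, div_le_div_iff_of_pos_right (by linarith : (0:ℝ) < 8*lam)]
    nlinarith only [hAP, sq_nonneg Lf]
  have hBw : B = ‖w - p‖ := norm_sub_rev _ _
  rw [← hBw]
  linarith only [htot, hyoung, hfin]

set_option maxHeartbeats 1000000 in
/-- For a cDCA sequence with `x⁰ ∈ dom g` and `F = f + g - h`
level-bounded, every accumulation point `x̂` of the sequence is a critical point of `F`,
i.e. `0 ∈ ∇f(x̂) + ∂g(x̂) - ∂h(x̂)`. (Here `x 0 = x⁻¹` and `x (k+1) = xᵏ`.) -/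
theorem stmt8 {n : ℕ}
    (f : Euc n → ℝ) (f' : Euc n → Euc n) (Lf : ℝ) (hLf : 0 < Lf)
    (hfconv : ConvexOn ℝ Set.univ f)
    (hfgrad : ∀ z, HasGradientAt f (f' z) z)
    (hflip : ∀ z w, ‖f' z - f' w‖ ≤ Lf * ‖z - w‖)
    (g : Euc n → EReal) (hgproper : ProperE g) (hgconv : ConvexEReal g)
    (hglsc : LowerSemicontinuous g)
    (h : Euc n → ℝ) (hhconv : ConvexOn ℝ Set.univ h)
    (F : Euc n → EReal) (hF : ∀ z, F z = ((f z - h z : ℝ) : EReal) + g z)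
    (P : ℝ → Euc n → Euc n) (hP : IsProx g P)
    (lam δ mu tau : ℝ) (hlam : 0 < lam) (hδ : δ ∈ Set.Ioo 0 (2*lam/Lf))
    (hmu : mu = 2/(2*lam + Lf)) (htau : tau = Lf^2 * δ^2 / (8*lam))
    (x : ℕ → Euc n) (hx : IsCDCA f' h P lam mu δ x) (hx0 : g (x 1) ≠ ⊤)
    (hlevel : ∀ r : ℝ, Bornology.IsBounded {z : Euc n | F z ≤ (r : EReal)})
    (xhat : Euc n) (φ : ℕ → ℕ) (hφ : StrictMono φ)
    (hlim : Tendsto (fun l : ℕ => x (φ l)) atTop (nhds xhat)) :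
    ∃ ξ ∈ SubdiffE g xhat, ∃ ζ ∈ SubdiffR h xhat, f' xhat + ξ - ζ = 0 := by
  obtain ⟨hδ0, hδub⟩ := hδ
  have hden : (0:ℝ) < 2*lam + Lf := by linarith
  have hmupos : 0 < mu := by rw [hmu]; positivity
  have hgbot := hgproper.1
  obtain ⟨x₀, hx₀⟩ := hgproper.2
  have htau0 : 0 ≤ tau := by rw [htau]; positivity
  have htaul : tau < lam/2 := by
    have h1 : δ * Lf < 2*lam := (lt_div_iff₀ hLf).1 hδub
    have h2 : 0 ≤ δ * Lf := by positivity
    rw [htau, div_lt_iff₀ (by linarith : (0:ℝ) < 8*lam)]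
    nlinarith only [h1, h2, hlam]
  have hrho : 0 < lam/2 - tau := by linarith
  -- extract algorithm data
  choose η hη y hyP hyδ using hx
  set ξ : ℕ → Euc n := fun k =>
    (Lf/2) • (y k - x (k+2)) + lam • (x (k+1) - x (k+2)) - f' (y k) + η k with hξdef
  have hmuL : mu * (Lf/2) = 1 - mu*lam := by
    rw [hmu]; field_simp; ring
  have hxi : ∀ k, mu⁻¹ • (((1 - mu*lam) • y k - mu • f' (y k)
      + (mu*lam) • x (k+1) + mu • η k) - x (k+2)) = ξ k := by
    intro k
    have hkey : mu • ξ k = ((1 - mu*lam) • y k - mu • f' (y k)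
        + (mu*lam) • x (k+1) + mu • η k) - x (k+2) := by
      simp only [hξdef]
      match_scalars <;> linarith only [hmuL]
    rw [← hkey, smul_smul, inv_mul_cancel₀ (ne_of_gt hmupos), one_smul]
  have hprox : ∀ k, g (x (k+2)) ≠ ⊤ ∧
      ∀ z, g (x (k+2)) + ((⟪ξ k, z - x (k+2)⟫_ℝ : ℝ) : EReal) ≤ g z := by
    intro k
    have hps := prox_subgrad g hgbot x₀ hx₀ hgconv P hP mu hmupos _ _ (hyP k).symm
    rw [hxi k] at hps
    exact hps
  have hdom : ∀ k, g (x (k+1)) ≠ ⊤ := by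
    intro k
    cases k with
    | zero => exact hx0
    | succ m => exact (hprox m).1
  -- the key decrease inequality
  have hdec : ∀ k, f (x (k+2)) - h (x (k+2)) + (g (x (k+2))).toReal
      + (lam/2) * ‖x (k+1) - x (k+2)‖^2
      ≤ f (x (k+1)) - h (x (k+1)) + (g (x (k+1))).toReal
      + tau * ‖x k - x (k+1)‖^2 := by
    intro k
    exact dec_core f f' Lf lam δ tau hLf hlam hδ0 htau hfconv hfgrad hflip g hgbot h
      (x k) (x (k+1)) (x (k+2)) (y k) (η k) (ξ k) (hdom k) (hprox k).1 (hη k)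
      rfl (hprox k).2 (hyδ k)
  -- energy sequence
  set E : ℕ → ℝ := fun k =>
    f (x (k+1)) - h (x (k+1)) + (g (x (k+1))).toReal + tau * ‖x k - x (k+1)‖^2 with hE
  have hEd : ∀ k, E (k+1) + (lam/2 - tau) * ‖x (k+1) - x (k+2)‖^2 ≤ E k := by
    intro k
    have h1 := hdec k
    simp only [hE, show k+1+1 = k+2 from rfl]
    linarith only [h1]
  have hEanti : Antitone E := by
    apply antitone_nat_of_succ_le
    intro k
    have hnn := mul_nonneg (le_of_lt hrho) (sq_nonneg ‖x (k+1) - x (k+2)‖)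
    exact le_trans (le_add_of_nonneg_right hnn) (hEd k)
  have hFkE : ∀ k, f (x (k+1)) - h (x (k+1)) + (g (x (k+1))).toReal ≤ E k := by
    intro k
    simp only [hE]
    have := mul_nonneg htau0 (sq_nonneg ‖x k - x (k+1)‖)
    linarith only [this]
  -- iterates stay in a sublevel set
  have hFxE : ∀ k, F (x (k+1))
      = ((f (x (k+1)) - h (x (k+1)) + (g (x (k+1))).toReal : ℝ) : EReal) := by
    intro k
    rw [hF, EReal.coe_add, EReal.coe_toReal (hdom k) (hgbot _)]
  have hxS : ∀ k, x (k+1) ∈ {z : Euc n | F z ≤ ((E 0 : ℝ) : EReal)} := by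
    intro k
    rw [Set.mem_setOf_eq, hFxE k]
    exact EReal.coe_le_coe_iff.2 (le_trans (hFkE k) (hEanti (Nat.zero_le k)))
  have hKcomp : IsCompact (closure {z : Euc n | F z ≤ ((E 0 : ℝ) : EReal)}) :=
    (hlevel (E 0)).isCompact_closure
  obtain ⟨Cg, hCg⟩ := lsc_lower_bound g hglsc hgbot _ hKcomp
  have hhcont : Continuous h := hhconv.locallyLipschitz.continuous
  have hfcont : Continuous f := by
    apply continuous_iff_continuousAt.2
    intro z
    exact (hfgrad z).hasFDerivAt.continuousAt
  obtain ⟨Cfh, hCfh⟩ := hKcomp.exists_bound_of_continuousOn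
    ((hfcont.sub hhcont).continuousOn :
      ContinuousOn (fun z => f z - h z) (closure {z : Euc n | F z ≤ ((E 0 : ℝ) : EReal)}))
  have hFlb : ∀ k, -Cfh + Cg ≤ f (x (k+1)) - h (x (k+1)) + (g (x (k+1))).toReal := by
    intro k
    have hmem := subset_closure (hxS k)
    have h1 := hCfh _ hmem
    have h2 := hCg _ hmem
    rw [← EReal.coe_toReal (hdom k) (hgbot _), EReal.coe_le_coe_iff] at h2
    rw [Real.norm_eq_abs] at h1
    have h4 := (abs_le.1 h1).1
    rw [Pi.sub_apply] at h4
    linarith only [h2, h4]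
  -- E converges, so the step norms tend to 0
  have hEbdd : BddBelow (Set.range E) := by
    refine ⟨-Cfh + Cg, ?_⟩
    rintro v ⟨k, rfl⟩
    exact le_trans (hFlb k) (hFkE k)
  have hEtend : Tendsto E atTop (𝓝 (⨅ k, E k)) := tendsto_atTop_ciInf hEanti hEbdd
  have hdiff : Tendsto (fun k => E k - E (k+1)) atTop (𝓝 0) := by
    have h2 : Tendsto (fun k => E (k+1)) atTop (𝓝 (⨅ k, E k)) :=
      hEtend.comp (tendsto_add_atTop_nat 1)
    simpa using hEtend.sub h2
  have hD2 : Tendsto (fun k => ‖x (k+1) - x (k+2)‖^2) atTop (𝓝 0) := by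
    have hb : ∀ k, ‖x (k+1) - x (k+2)‖^2 ≤ (E k - E (k+1))/(lam/2 - tau) := by
      intro k
      rw [le_div_iff₀ hrho]
      linarith only [hEd k]
    have hg0 : Tendsto (fun k => (E k - E (k+1))/(lam/2 - tau)) atTop (𝓝 0) := by
      have := hdiff.div_const (lam/2 - tau)
      simpa using this
    exact squeeze_zero (fun k => sq_nonneg _) hb hg0
  have hDto : Tendsto (fun k => ‖x (k+1) - x (k+2)‖) atTop (𝓝 0) := by
    have h1 : Tendsto (fun k => Real.sqrt (‖x (k+1) - x (k+2)‖^2)) atTop (𝓝 (Real.sqrt 0)) :=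
      (Real.continuous_sqrt.tendsto 0).comp hD2
    simp only [Real.sqrt_zero] at h1
    have h2 : (fun k => Real.sqrt (‖x (k+1) - x (k+2)‖^2))
        = fun k => ‖x (k+1) - x (k+2)‖ := by
      funext k; exact Real.sqrt_sq (norm_nonneg _)
    rwa [h2] at h1
  have hDpto : Tendsto (fun k => ‖x k - x (k+1)‖) atTop (𝓝 0) := by
    rw [← tendsto_add_atTop_iff_nat 1]
    exact hDto
  -- limits along the subsequence
  have hφatTop : Tendsto φ atTop atTop := hφ.tendsto_atTop
  have hx1 : Tendsto (fun l => x (φ l + 1)) atTop (𝓝 xhat) := by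
    have hdiffv : Tendsto (fun l => x (φ l + 1) - x (φ l)) atTop (𝓝 0) := by
      rw [tendsto_zero_iff_norm_tendsto_zero]
      apply squeeze_zero (fun l => norm_nonneg _) (fun l => ?_) (hDpto.comp hφatTop)
      simp only [Function.comp_apply]
      rw [norm_sub_rev]
    simpa using hlim.add hdiffv
  have hx2 : Tendsto (fun l => x (φ l + 2)) atTop (𝓝 xhat) := by
    have hdiffv : Tendsto (fun l => x (φ l + 2) - x (φ l + 1)) atTop (𝓝 0) := by
      rw [tendsto_zero_iff_norm_tendsto_zero]
      apply squeeze_zero (fun l => norm_nonneg _) (fun l => ?_) (hDto.comp hφatTop)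
      simp only [Function.comp_apply]
      rw [norm_sub_rev]
    simpa using hx1.add hdiffv
  have hyto : Tendsto (fun l => y (φ l)) atTop (𝓝 xhat) := by
    have hdiffv : Tendsto (fun l => x (φ l + 2) - y (φ l)) atTop (𝓝 0) := by
      rw [tendsto_zero_iff_norm_tendsto_zero]
      apply squeeze_zero (fun l => norm_nonneg _) (fun l => hyδ (φ l)) ?_
      have h1 : Tendsto (fun l => ‖x (φ l) - x (φ l + 1)‖) atTop (𝓝 0) :=
        hDpto.comp hφatTop
      simpa using h1.const_mul δ
    simpa using hx2.sub hdiffv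
  -- bound the h-subgradients
  obtain ⟨Ch, hCh⟩ := (isCompact_closedBall xhat 2).exists_bound_of_continuousOn
    hhcont.continuousOn
  have hCh0 : 0 ≤ Ch := le_trans (norm_nonneg _)
    (hCh xhat (Metric.mem_closedBall_self (by norm_num)))
  obtain ⟨N, hN⟩ : ∃ N : ℕ, ∀ l ≥ N, ‖x (φ l + 1) - xhat‖ ≤ 1 := by
    have hev : ∀ᶠ l in atTop, ‖x (φ l + 1) - xhat‖ ≤ 1 := by
      have := hx1.eventually_mem (Metric.closedBall_mem_nhds xhat one_pos)
      filter_upwards [this] with l hl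
      simp only [Metric.mem_closedBall, dist_eq_norm] at hl
      exact hl
    exact eventually_atTop.1 hev
  have hηbd : ∀ l : ℕ, η (φ (l + N)) ∈ Metric.closedBall (0 : Euc n) (2*Ch) := by
    intro l
    rw [Metric.mem_closedBall, dist_zero_right]
    by_cases hz : η (φ (l + N)) = 0
    · rw [hz, norm_zero]; linarith
    · have hw1 : ‖x (φ (l + N) + 1) - xhat‖ ≤ 1 := hN (l + N) (Nat.le_add_left _ _)
      set k := φ (l + N) with hk
      set w := x (k + 1) with hw
      set u := ‖η k‖⁻¹ • η k with hu
      have hun : ‖u‖ = 1 := by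
        rw [hu, norm_smul, Real.norm_eq_abs, abs_of_nonneg (by positivity)]
        have hne : ‖η k‖ ≠ 0 := norm_ne_zero_iff.2 hz
        field_simp
      have hsub : h w + ⟪η k, (w + u) - w⟫_ℝ ≤ h (w + u) := by
        have h1 := hη k
        simp only [SubdiffR, Set.mem_setOf_eq] at h1
        exact h1 (w + u)
      have hiu : ⟪η k, (w + u) - w⟫_ℝ = ‖η k‖ := by
        have e : (w + u) - w = u := by abel
        rw [e, hu, real_inner_smul_right, real_inner_self_eq_norm_sq]
        have hne : ‖η k‖ ≠ 0 := norm_ne_zero_iff.2 hz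
        field_simp
      have hmem1 : w ∈ Metric.closedBall xhat 2 := by
        rw [Metric.mem_closedBall, dist_eq_norm]; linarith
      have hmem2 : w + u ∈ Metric.closedBall xhat 2 := by
        rw [Metric.mem_closedBall, dist_eq_norm]
        have e : w + u - xhat = (w - xhat) + u := by abel
        rw [e]
        calc ‖(w - xhat) + u‖ ≤ ‖w - xhat‖ + ‖u‖ := norm_add_le _ _
          _ ≤ 2 := by rw [hun]; linarith
      have hb1 := hCh _ hmem1
      have hb2 := hCh _ hmem2
      rw [Real.norm_eq_abs] at hb1 hb2
      rw [hiu] at hsub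
      linarith [(abs_le.1 hb1).1, (abs_le.1 hb2).2]
  obtain ⟨ζ, hζball, ψ, hψ, hηlim⟩ :=
    (isCompact_closedBall (0 : Euc n) (2*Ch)).tendsto_subseq hηbd
  set σ : ℕ → ℕ := fun m => φ (ψ m + N) with hσ
  have hmap : Tendsto (fun m => ψ m + N) atTop atTop :=
    (tendsto_add_atTop_nat N).comp hψ.tendsto_atTop
  have hx1σ : Tendsto (fun m => x (σ m + 1)) atTop (𝓝 xhat) := hx1.comp hmap
  have hx2σ : Tendsto (fun m => x (σ m + 2)) atTop (𝓝 xhat) := hx2.comp hmap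
  have hyσ : Tendsto (fun m => y (σ m)) atTop (𝓝 xhat) := hyto.comp hmap
  have hησ : Tendsto (fun m => η (σ m)) atTop (𝓝 ζ) := hηlim
  have hf'cont : Continuous f' := by
    have hL : LipschitzWith (Real.toNNReal Lf) f' :=
      LipschitzWith.of_dist_le_mul (fun z w => by
        have h1 := hflip z w
        have hLc : (Real.toNNReal Lf : ℝ) = max Lf 0 := Real.coe_toNNReal' Lf
        rw [dist_eq_norm, dist_eq_norm, hLc]
        nlinarith [norm_nonneg (z - w), le_max_left Lf 0])
    exact hL.continuous
  have hf'y : Tendsto (fun m => f' (y (σ m))) atTop (𝓝 (f' xhat)) :=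
    (hf'cont.tendsto xhat).comp hyσ
  -- ζ is a subgradient of h at xhat
  have hζsub : ζ ∈ SubdiffR h xhat := by
    simp only [SubdiffR, Set.mem_setOf_eq]
    intro z
    have hstep : ∀ m, h (x (σ m + 1)) + ⟪η (σ m), z - x (σ m + 1)⟫_ℝ ≤ h z := by
      intro m
      have h1 := hη (σ m)
      simp only [SubdiffR, Set.mem_setOf_eq] at h1
      exact h1 z
    have hlhs : Tendsto (fun m => h (x (σ m + 1)) + ⟪η (σ m), z - x (σ m + 1)⟫_ℝ)
        atTop (𝓝 (h xhat + ⟪ζ, z - xhat⟫_ℝ)) :=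
      ((hhcont.tendsto xhat).comp hx1σ).add
        (hησ.inner (tendsto_const_nhds.sub hx1σ))
    exact le_of_tendsto hlhs (Eventually.of_forall hstep)
  -- ξ converges to ζ - f' xhat
  have hξσ : Tendsto (fun m => ξ (σ m)) atTop (𝓝 (ζ - f' xhat)) := by
    have h1 : Tendsto (fun m => y (σ m) - x (σ m + 2)) atTop (𝓝 0) := by
      simpa using hyσ.sub hx2σ
    have h2 : Tendsto (fun m => x (σ m + 1) - x (σ m + 2)) atTop (𝓝 0) := by
      simpa using hx1σ.sub hx2σ
    have h3 : Tendsto (fun m => (Lf/2) • (y (σ m) - x (σ m + 2))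
        + lam • (x (σ m + 1) - x (σ m + 2)) - f' (y (σ m)) + η (σ m)) atTop
        (𝓝 ((Lf/2) • (0:Euc n) + lam • (0:Euc n) - f' xhat + ζ)) :=
      (((h1.const_smul (Lf/2)).add (h2.const_smul lam)).sub hf'y).add hησ
    simp only [smul_zero, add_zero, zero_add] at h3
    have he : (0:Euc n) - f' xhat + ζ = ζ - f' xhat := by abel
    rw [he] at h3
    exact h3
  -- ζ - f' xhat is a subgradient of g at xhat
  have hξhat : ζ - f' xhat ∈ SubdiffE g xhat := by
    simp only [SubdiffE, Set.mem_setOf_eq]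
    intro z
    by_cases hz : g z = ⊤
    · rw [hz]; exact le_top
    have hgz : (((g z).toReal : ℝ) : EReal) = g z := EReal.coe_toReal hz (hgbot z)
    have hcm : Tendsto (fun m => ⟪ξ (σ m), z - x (σ m + 2)⟫_ℝ)
        atTop (𝓝 (⟪ζ - f' xhat, z - xhat⟫_ℝ)) :=
      hξσ.inner (tendsto_const_nhds.sub hx2σ)
    have hstep : ∀ m, (g (x (σ m + 2))).toReal + ⟪ξ (σ m), z - x (σ m + 2)⟫_ℝ
        ≤ (g z).toReal := by
      intro m
      have h2 := (hprox (σ m)).2 z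
      rw [← EReal.coe_toReal (hprox (σ m)).1 (hgbot _), ← hgz, ← EReal.coe_add,
        EReal.coe_le_coe_iff] at h2
      exact h2
    have hclaim : ∀ r : ℝ, ((r : ℝ) : EReal) < g xhat →
        r + ⟪ζ - f' xhat, z - xhat⟫_ℝ ≤ (g z).toReal := by
      intro r hr
      have hev := hglsc xhat _ hr
      have hev2 : ∀ᶠ m in atTop, ((r : ℝ) : EReal) < g (x (σ m + 2)) := hx2σ.eventually hev
      have hev3 : ∀ᶠ m in atTop,
          r ≤ (g z).toReal - ⟪ξ (σ m), z - x (σ m + 2)⟫_ℝ := by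
        filter_upwards [hev2] with m hm
        rw [← EReal.coe_toReal (hprox (σ m)).1 (hgbot _), EReal.coe_lt_coe_iff] at hm
        linarith [hstep m]
      have hlim2 : Tendsto (fun m => (g z).toReal - ⟪ξ (σ m), z - x (σ m + 2)⟫_ℝ)
          atTop (𝓝 ((g z).toReal - ⟪ζ - f' xhat, z - xhat⟫_ℝ)) :=
        tendsto_const_nhds.sub hcm
      have := ge_of_tendsto hlim2 hev3
      linarith
    have hxtop : g xhat ≠ ⊤ := by
      intro htop
      have := hclaim ((g z).toReal - ⟪ζ - f' xhat, z - xhat⟫_ℝ + 1)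
        (by rw [htop]; exact EReal.coe_lt_top _)
      linarith
    have hxreal : ((g xhat).toReal : EReal) = g xhat := EReal.coe_toReal hxtop (hgbot xhat)
    set a := (g xhat).toReal with ha
    have hfin : a + ⟪ζ - f' xhat, z - xhat⟫_ℝ ≤ (g z).toReal := by
      by_contra hcon
      push_neg at hcon
      set c := ⟪ζ - f' xhat, z - xhat⟫_ℝ with hc
      have h1 : ((((g z).toReal - c + a)/2 : ℝ) : EReal) < g xhat := by
        rw [← hxreal, EReal.coe_lt_coe_iff]
        linarith
      have h2 := hclaim _ h1
      linarith
    rw [← hxreal, ← hgz, ← EReal.coe_add, EReal.coe_le_coe_iff]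
    exact hfin
  refine ⟨ζ - f' xhat, hξhat, ζ, hζsub, ?_⟩
  abel
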